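/- arXiv:math/9807192 — 3 statements merged into one kernel-verified Lean document; each statement's English description precedes it below -/
import Mathlib

section
/- For k ≠ 0 and k4 = √(−k·k3) with k·k3 < 0, the function h(z) = −k4·tan(k4(z + k2))/k satisfies the ODE h'' + 2k·h·h' = 0 at every point z where cos(k4(z + k2)) ≠ 0. -/
/-- For k ≠ 0 and k4 = √(−k·k3) with k·k3 < 0, the function
h(z) = −k4·tan(k4(z + k2))/k satisfies h'' + 2k·h·h' = 0 at every z where
cos(k4(z + k2)) ≠ 0. -/
theorem stmt2 (k k2 k3 : ℝ) (hk : k ≠ 0) (hkk3 : k * k3 < 0)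
    (k4 : ℝ) (hk4 : k4 = Real.sqrt (-(k * k3)))
    (h : ℝ → ℝ) (hh : ∀ z, h z = -(k4 * Real.tan (k4 * (z + k2))) / k) :
    ∀ z : ℝ, Real.cos (k4 * (z + k2)) ≠ 0 →
      deriv (deriv h) z + 2 * k * h z * deriv h z = 0 := by
  intro z hz
  set u : ℝ → ℝ := fun z => k4 * (z + k2) with hu
  have hu' : ∀ x, HasDerivAt u k4 x := by
    intro x
    simpa using ((hasDerivAt_id x).add_const k2).const_mul k4
  -- first derivative formula
  have hderiv : ∀ x, Real.cos (u x) ≠ 0 →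
      HasDerivAt h (-(k4 * k4 * (1 / Real.cos (u x) ^ 2)) / k) x := by
    intro x hx
    have ht : HasDerivAt (fun y => Real.tan (u y)) (1 / Real.cos (u x) ^ 2 * k4) x :=
      (Real.hasDerivAt_tan hx).comp x (hu' x)
    have : HasDerivAt h (-(k4 * (1 / Real.cos (u x) ^ 2 * k4)) / k) x := by
      have := ((ht.const_mul k4).neg).div_const k
      refine HasDerivAt.congr_of_eventuallyEq this ?_
      filter_upwards with y using (hh y)
    convert this using 1; ring
  -- open set where cos (u x) ≠ 0
  have hopen : IsOpen {x : ℝ | Real.cos (u x) ≠ 0} :=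
    isOpen_compl_iff.mpr (isClosed_eq (Real.continuous_cos.comp (by continuity)) continuous_const)
  have hmem : {x : ℝ | Real.cos (u x) ≠ 0} ∈ nhds z := hopen.mem_nhds hz
  set g : ℝ → ℝ := fun x => -(k4 * k4 * (1 / Real.cos (u x) ^ 2)) / k with hg
  have hEq : deriv h =ᶠ[nhds z] g := by
    filter_upwards [hmem] with x hx
    exact (hderiv x hx).deriv
  -- derivative of g at z
  have hc : HasDerivAt (fun x => Real.cos (u x) ^ 2)
      (2 * Real.cos (u z) * (-Real.sin (u z) * k4)) z := by
    have := ((Real.hasDerivAt_cos (u z)).comp z (hu' z)).fun_pow 2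
    simp only [Function.comp] at this
    exact this.congr_deriv (by push_cast; ring)
  have hc2 : Real.cos (u z) ^ 2 ≠ 0 := pow_ne_zero 2 hz
  have hg' : HasDerivAt g
      (-(k4 * k4 * (-(2 * Real.cos (u z) * (-Real.sin (u z) * k4)) / (Real.cos (u z) ^ 2) ^ 2)) / k) z := by
    have hinv := hc.inv hc2
    have : HasDerivAt (fun x => (Real.cos (u x) ^ 2)⁻¹)
        (-(2 * Real.cos (u z) * (-Real.sin (u z) * k4)) / (Real.cos (u z) ^ 2) ^ 2) z := hinv
    have := ((this.const_mul (k4 * k4)).neg).div_const k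
    refine HasDerivAt.congr_of_eventuallyEq this ?_
    filter_upwards with y
    simp [hg, one_div]
  have h2 : deriv (deriv h) z =
      -(k4 * k4 * (-(2 * Real.cos (u z) * (-Real.sin (u z) * k4)) / (Real.cos (u z) ^ 2) ^ 2)) / k := by
    rw [hEq.deriv_eq]
    exact hg'.deriv
  have h1 : deriv h z = -(k4 * k4 * (1 / Real.cos (u z) ^ 2)) / k := (hderiv z hz).deriv
  rw [h2, h1, hh z, Real.tan_eq_sin_div_cos]
  have : u z = k4 * (z + k2) := rfl
  field_simp
  ring
end

section
/- The function u(x,t) = (c·e^{2at}/x² − a(n−1)/(2n))^{1/(n−1)} · x^{2/(n−1)} is a solution of the PDE u_t = (u^n)_{xx} + (C/x)(u^n)_x with C = −(n+1)/(n−1), on any region where x > 0 and c·e^{2at}/x² − a(n−1)/(2n) > 0. -/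
set_option maxHeartbeats 2000000 in
/-- u(x,t) = (c·e^{2at}/x² − a(n−1)/(2n))^{1/(n−1)} · x^{2/(n−1)}
solves u_t = (u^n)_{xx} + (C/x)(u^n)_x with C = −(n+1)/(n−1), on x > 0 where the
base is positive. -/
theorem stmt3 (n a c C : ℝ) (hn0 : n ≠ 0) (hn1 : n ≠ 1)
    (hC : C = -((n + 1) / (n - 1)))
    (u : ℝ → ℝ → ℝ)
    (hu : ∀ x t, u x t =
      (c * Real.exp (2 * a * t) / x ^ 2 - a * (n - 1) / (2 * n)) ^ ((1 : ℝ) / (n - 1))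
        * x ^ ((2 : ℝ) / (n - 1))) :
    ∀ x t : ℝ, x > 0 →
      c * Real.exp (2 * a * t) / x ^ 2 - a * (n - 1) / (2 * n) > 0 →
      deriv (fun s => u x s) t =
        deriv (fun y => deriv (fun y' => (u y' t) ^ n) y) x +
        (C / x) * deriv (fun y => (u y t) ^ n) x := by
  intro x t hx hg
  have hn1' : n - 1 ≠ 0 := sub_ne_zero.mpr hn1
  set b : ℝ := a * (n - 1) / (2 * n) with hb
  set K : ℝ := c * Real.exp (2 * a * t) with hK
  set m : ℝ := n / (n - 1) with hm
  set P : ℝ := 2 * n / (n - 1) with hP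
  -- time derivative
  have hgt : HasDerivAt (fun s => c * Real.exp (2 * a * s) / x ^ 2 - b)
      (2 * a * K / x ^ 2) t := by
    have h1 : HasDerivAt (fun s : ℝ => 2 * a * s) (2 * a) t := by
      simpa using (hasDerivAt_id t).const_mul (2 * a)
    have h4 := ((h1.exp.const_mul c).div_const (x ^ 2)).sub_const b
    refine h4.congr_deriv ?_
    rw [hK]; ring
  have hrw : (fun s => u x s) =
      fun s => (c * Real.exp (2 * a * s) / x ^ 2 - b) ^ ((1 : ℝ) / (n - 1))
        * x ^ ((2 : ℝ) / (n - 1)) := funext fun s => hu x s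
  have h5 : HasDerivAt
      (fun s => (c * Real.exp (2 * a * s) / x ^ 2 - b) ^ ((1 : ℝ) / (n - 1))
        * x ^ ((2 : ℝ) / (n - 1)))
      ((2 * a * K / x ^ 2 * ((1 : ℝ) / (n - 1)) *
        (K / x ^ 2 - b) ^ ((1 : ℝ) / (n - 1) - 1)) * x ^ ((2 : ℝ) / (n - 1))) t := by
    exact (hgt.rpow_const (Or.inl (ne_of_gt hg))).mul_const _
  -- the open set
  set U : Set ℝ := {y : ℝ | 0 < y ∧ 0 < K / y ^ 2 - b} with hUdef
  have hU : IsOpen U := by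
    have : U = Set.Ioi 0 ∩ (fun y : ℝ => K / y ^ 2 - b) ⁻¹' Set.Ioi 0 := by
      ext y; simp [hUdef, Set.mem_Ioi]
    rw [this]
    refine ContinuousOn.isOpen_inter_preimage ?_ isOpen_Ioi isOpen_Ioi
    refine ContinuousOn.sub (ContinuousOn.div continuousOn_const
      (continuous_pow 2).continuousOn ?_) continuousOn_const
    intro y hy
    exact pow_ne_zero 2 (ne_of_gt hy)
  have hxU : x ∈ U := ⟨hx, hg⟩
  -- u^n on U
  have heq : ∀ y ∈ U, u y t ^ n = (K / y ^ 2 - b) ^ m * y ^ P := by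
    rintro y ⟨hy, hgy⟩
    rw [hu, ← hK,
      Real.mul_rpow (Real.rpow_nonneg hgy.le _) (Real.rpow_nonneg hy.le _),
      ← Real.rpow_mul hgy.le, ← Real.rpow_mul hy.le,
      show (1 : ℝ) / (n - 1) * n = m by rw [hm]; ring,
      show (2 : ℝ) / (n - 1) * n = P by rw [hP]; ring]
  -- derivative of the inner function
  have hg' : ∀ y : ℝ, y ≠ 0 → HasDerivAt (fun y => K / y ^ 2 - b) (-2 * K / y ^ 3) y := by
    intro y hy
    have h1 := (((hasDerivAt_pow 2 y).inv (pow_ne_zero 2 hy)).const_mul K).sub_const b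
    have h2 : (fun y : ℝ => K / y ^ 2 - b) = fun y : ℝ => K * (y ^ 2)⁻¹ - b := by
      funext z; rw [div_eq_mul_inv]
    rw [h2]
    refine h1.congr_deriv ?_
    field_simp
    ring
  have hVd : ∀ y ∈ U, HasDerivAt
      (fun y' => (K / y' ^ 2 - b) ^ m * y' ^ P)
      (-2 * K * m * ((K / y ^ 2 - b) ^ (m - 1) * y ^ (P - 3)) +
        P * ((K / y ^ 2 - b) ^ m * y ^ (P - 1))) y := by
    rintro y ⟨hy, hgy⟩
    have h1 := ((hg' y hy.ne').rpow_const (p := m) (Or.inl hgy.ne')).mul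
      (Real.hasDerivAt_rpow_const (p := P) (Or.inl hy.ne'))
    refine h1.congr_deriv ?_
    have e1 : y ^ (P - 3) = y ^ P / y ^ (3 : ℕ) := by
      rw [Real.rpow_sub hy, show y ^ (3 : ℝ) = y ^ (3 : ℕ) by
        rw [← Real.rpow_natCast y 3]; norm_num]
    rw [e1]
    field_simp
  have hUn : ∀ y ∈ U, HasDerivAt (fun y' => u y' t ^ n)
      (-2 * K * m * ((K / y ^ 2 - b) ^ (m - 1) * y ^ (P - 3)) +
        P * ((K / y ^ 2 - b) ^ m * y ^ (P - 1))) y := by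
    intro y hy
    refine (hVd y hy).congr_of_eventuallyEq ?_
    filter_upwards [hU.mem_nhds hy] with z hz
    exact heq z hz
  -- second derivative equals derivative of V
  have h2d : deriv (fun y => deriv (fun y' => u y' t ^ n) y) x =
      deriv (fun y => -2 * K * m * ((K / y ^ 2 - b) ^ (m - 1) * y ^ (P - 3)) +
        P * ((K / y ^ 2 - b) ^ m * y ^ (P - 1))) x := by
    apply Filter.EventuallyEq.deriv_eq
    filter_upwards [hU.mem_nhds hxU] with z hz
    exact (hUn z hz).deriv
  -- derivative of V at x
  have hW : HasDerivAt
      (fun y => -2 * K * m * ((K / y ^ 2 - b) ^ (m - 1) * y ^ (P - 3)) +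
        P * ((K / y ^ 2 - b) ^ m * y ^ (P - 1)))
      (-2 * K * m *
        ((-2 * K / x ^ 3 * (m - 1) * (K / x ^ 2 - b) ^ (m - 1 - 1)) * x ^ (P - 3) +
          (K / x ^ 2 - b) ^ (m - 1) * ((P - 3) * x ^ (P - 3 - 1))) +
       P * ((-2 * K / x ^ 3 * m * (K / x ^ 2 - b) ^ (m - 1)) * x ^ (P - 1) +
          (K / x ^ 2 - b) ^ m * ((P - 1) * x ^ (P - 1 - 1)))) x := by
    have hA := ((hg' x hx.ne').rpow_const (p := m - 1) (Or.inl hg.ne')).mul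
      (Real.hasDerivAt_rpow_const (p := P - 3) (Or.inl hx.ne'))
    have hB := ((hg' x hx.ne').rpow_const (p := m) (Or.inl hg.ne')).mul
      (Real.hasDerivAt_rpow_const (p := P - 1) (Or.inl hx.ne'))
    exact (hA.const_mul (-2 * K * m)).add (hB.const_mul P)
  rw [hrw, h5.deriv, h2d, hW.deriv, (hUn x hxU).deriv]
  -- now pure algebra with rpow exponent reductions
  have e1 : (K / x ^ 2 - b) ^ (m - 1) =
      (K / x ^ 2 - b) ^ ((1 : ℝ) / (n - 1) - 1) * (K / x ^ 2 - b) := by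
    rw [show m - 1 = ((1 : ℝ) / (n - 1) - 1) + 1 by rw [hm]; field_simp; try ring,
      Real.rpow_add hg, Real.rpow_one]
  have e2 : (K / x ^ 2 - b) ^ (m - 1 - 1) = (K / x ^ 2 - b) ^ ((1 : ℝ) / (n - 1) - 1) := by
    rw [show m - 1 - 1 = (1 : ℝ) / (n - 1) - 1 by rw [hm]; field_simp; ring]
  have e3 : (K / x ^ 2 - b) ^ m =
      (K / x ^ 2 - b) ^ ((1 : ℝ) / (n - 1) - 1) * (K / x ^ 2 - b) * (K / x ^ 2 - b) := by
    rw [show m = ((1 : ℝ) / (n - 1) - 1) + 1 + 1 by rw [hm]; field_simp; try ring,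
      Real.rpow_add hg, Real.rpow_add hg, Real.rpow_one]
  have f1 : x ^ (P - 3) = x ^ ((2 : ℝ) / (n - 1) - 2) * x := by
    rw [show P - 3 = ((2 : ℝ) / (n - 1) - 2) + 1 by rw [hP]; field_simp; try ring,
      Real.rpow_add hx, Real.rpow_one]
  have f2 : x ^ (P - 3 - 1) = x ^ ((2 : ℝ) / (n - 1) - 2) := by
    rw [show P - 3 - 1 = (2 : ℝ) / (n - 1) - 2 by rw [hP]; field_simp; try ring]
  have f3 : x ^ (P - 1) = x ^ ((2 : ℝ) / (n - 1) - 2) * x * x * x := by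
    rw [show P - 1 = ((2 : ℝ) / (n - 1) - 2) + 1 + 1 + 1 by rw [hP]; field_simp; try ring,
      Real.rpow_add hx, Real.rpow_add hx, Real.rpow_add hx, Real.rpow_one]
  have f4 : x ^ (P - 1 - 1) = x ^ ((2 : ℝ) / (n - 1) - 2) * x * x := by
    rw [show P - 1 - 1 = ((2 : ℝ) / (n - 1) - 2) + 1 + 1 by rw [hP]; field_simp; try ring,
      Real.rpow_add hx, Real.rpow_add hx, Real.rpow_one]
  have f5 : x ^ ((2 : ℝ) / (n - 1)) = x ^ ((2 : ℝ) / (n - 1) - 2) * x * x := by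
    rw [Real.rpow_sub hx, show x ^ (2 : ℝ) = x * x by
      rw [show (2 : ℝ) = ((2 : ℕ) : ℝ) by norm_num, Real.rpow_natCast]; ring]
    field_simp
  rw [e1, e2, e3, f1, f2, f3, f4, f5, hC, hm, hP]
  have hx0 : x ≠ 0 := hx.ne'
  generalize (K / x ^ 2 - b) ^ ((1 : ℝ) / (n - 1) - 1) = E
  generalize x ^ ((2 : ℝ) / (n - 1) - 2) = X
  rw [hb]
  field_simp
  ring
end

section
/- Let n ∉ {0,1}, a = 2 − 2n, and let y(z) satisfy the first integral equation y' + (C/(2n) − 1 − 1/(2n))·y/z + y^{1/n}/(4n²) = 0 on z > 0 with y > 0. Then y satisfies the second-order ODE y'' − y'·[(C₁+n+a−1)/((a−2)(n−1)z) − y^{1/n−1}/((a−2)²n)] + a·n(C₁−n+1)·y/((a−2)²(n−1)²z²) = 0, where C₁ = Cn + an − C. -/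
/-- for n ∉ {0,1}, a = 2−2n, C₁ = Cn+an−C, if y > 0 on (0,∞) is twice
differentiable and satisfies the first integral
y' + (C/(2n) − 1 − 1/(2n))·y/z + y^{1/n}/(4n²) = 0, then y satisfies
y'' − y'·[(C₁+n+a−1)/((a−2)(n−1)z) − y^{1/n−1}/((a−2)²n)]
  + a·n(C₁−n+1)·y/((a−2)²(n−1)²z²) = 0. -/
theorem stmt10 (n C a C₁ : ℝ) (hn0 : n ≠ 0) (hn1 : n ≠ 1)
    (ha : a = 2 - 2 * n) (hC₁ : C₁ = C * n + a * n - C)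
    (y : ℝ → ℝ)
    (hypos : ∀ z : ℝ, z > 0 → y z > 0)
    (hdiff : ∀ z : ℝ, z > 0 → DifferentiableAt ℝ y z)
    (hdiff2 : ∀ z : ℝ, z > 0 → DifferentiableAt ℝ (deriv y) z)
    (hfi : ∀ z : ℝ, z > 0 →
      deriv y z + (C / (2 * n) - 1 - 1 / (2 * n)) * y z / z
        + (y z) ^ ((1 : ℝ) / n) / (4 * n ^ 2) = 0) :
    ∀ z : ℝ, z > 0 →
      deriv (deriv y) z
        - deriv y z * ((C₁ + n + a - 1) / ((a - 2) * (n - 1) * z)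
            - (y z) ^ ((1 : ℝ) / n - 1) / ((a - 2) ^ 2 * n))
        + a * n * (C₁ - n + 1) * y z / ((a - 2) ^ 2 * (n - 1) ^ 2 * z ^ 2) = 0 := by

  subst ha hC₁
  intro z hz
  have hyz := hypos z hz
  set k : ℝ := C / (2 * n) - 1 - 1 / (2 * n) with hk
  have hy' : HasDerivAt y (deriv y z) z := (hdiff z hz).hasDerivAt
  have h1 : HasDerivAt (fun t => k * y t / t)
      ((k * deriv y z * z - k * y z * 1) / z ^ 2) z :=
    (hy'.const_mul k).div (hasDerivAt_id z) (ne_of_gt hz)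
  have h2 : HasDerivAt (fun t => y t ^ ((1:ℝ)/n) / (4 * n ^ 2))
      ((deriv y z * ((1:ℝ)/n) * y z ^ ((1:ℝ)/n - 1)) / (4 * n ^ 2)) z :=
    (hy'.rpow_const (Or.inl (ne_of_gt hyz))).div_const _
  have hg : HasDerivAt (fun t => -(k * y t / t + y t ^ ((1:ℝ)/n) / (4 * n ^ 2)))
      (-((k * deriv y z * z - k * y z * 1) / z ^ 2
        + (deriv y z * ((1:ℝ)/n) * y z ^ ((1:ℝ)/n - 1)) / (4 * n ^ 2))) z :=
    (h1.add h2).neg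
  have hev : deriv y =ᶠ[nhds z] fun t => -(k * y t / t + y t ^ ((1:ℝ)/n) / (4 * n ^ 2)) := by
    filter_upwards [eventually_gt_nhds hz] with t ht
    have := hfi t ht
    simp only [hk]
    linarith
  have hdd : deriv (deriv y) z
      = -((k * deriv y z * z - k * y z * 1) / z ^ 2
        + (deriv y z * ((1:ℝ)/n) * y z ^ ((1:ℝ)/n - 1)) / (4 * n ^ 2)) := by
    rw [hev.deriv_eq]; exact hg.deriv
  have hsub : y z ^ ((1:ℝ)/n - 1) = y z ^ ((1:ℝ)/n) / y z := by
    rw [Real.rpow_sub hyz, Real.rpow_one]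
  have hyp : deriv y z = -(k * y z / z + y z ^ ((1:ℝ)/n) / (4 * n ^ 2)) := by
    have := hfi z hz
    simp only [hk]
    linarith
  rw [hdd, hsub, hyp, hk]
  have hz' : z ≠ 0 := ne_of_gt hz
  have hy0 : y z ≠ 0 := ne_of_gt hyz
  have hn1' : n - 1 ≠ 0 := sub_ne_zero.mpr hn1
  have ha2 : (2 - 2 * n) - 2 ≠ 0 := by intro h; apply hn0; linarith
  generalize y z ^ ((1:ℝ)/n) = w
  rw [show (2 - 2 * n) - 2 = -(2 * n) by ring]
  field_simp
  ring
end
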